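/- arXiv:2412.20228 — 2 statements merged into one kernel-verified Lean document; each statement's English description precedes it below -/
import Mathlib

section
/- Let (Ω, F, P) be a probability space, let W : Ω → ℝ be an integrable random variable, and let τ > 0. Then f_τ ∘ W is integrable and |E[f_τ(W)] − E[|W|]| ≤ τ·log 2. In particular, for any sequence τ_n → 0⁺, E[f_{τ_n}(W)] → E[|W|]. -/
open MeasureTheory

/-- Hutson's smooth approximation of the absolute value. -/
noncomputable def gSmooth (τ u : ℝ) : ℝ :=
  τ * (Real.log (Real.exp (-u / τ) + 1) + Real.log (Real.exp (u / τ) + 1))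

/-- The hyperbolic-tangent smooth approximation of the absolute value. -/
noncomputable def hSmooth (τ u : ℝ) : ℝ := u * Real.tanh (u / τ)

/-- The mixed smooth approximation `f_τ = (g_τ + h_τ)/2` of the absolute value. -/
noncomputable def fSmooth (τ u : ℝ) : ℝ := (gSmooth τ u + hSmooth τ u) / 2

-- identity: fSmooth τ u = u + τ * (log (1 + (exp (u/τ))⁻¹) - (u/τ)/((exp (u/τ))^2 + 1))
lemma fSmooth_identity (τ u : ℝ) (hτ : 0 < τ) :
    fSmooth τ u = u + τ * (Real.log (1 + (Real.exp (u/τ))⁻¹)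
      - (u/τ) / ((Real.exp (u/τ))^2 + 1)) := by
  set t := u / τ with ht
  have hu : u = τ * t := by rw [ht]; field_simp
  have hE : (0:ℝ) < Real.exp t := Real.exp_pos t
  have h1 : Real.exp (-u / τ) = (Real.exp t)⁻¹ := by
    rw [neg_div, ← ht, Real.exp_neg]
  have h2 : Real.log ((Real.exp t)⁻¹ + 1) = Real.log (1 + (Real.exp t)⁻¹) := by ring_nf
  have h3 : Real.log (Real.exp t + 1) = t + Real.log (1 + (Real.exp t)⁻¹) := by
    have : Real.exp t + 1 = Real.exp t * (1 + (Real.exp t)⁻¹) := by field_simp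
    rw [this, Real.log_mul (ne_of_gt hE) (by positivity), Real.log_exp]
  have h4 : Real.tanh t = ((Real.exp t)^2 - 1) / ((Real.exp t)^2 + 1) := by
    rw [Real.tanh_eq_sinh_div_cosh, Real.sinh_eq, Real.cosh_eq, Real.exp_neg]
    rw [div_eq_div_iff (by positivity) (by positivity)]
    field_simp
  unfold fSmooth gSmooth hSmooth
  rw [← ht, h1, h2, h3, h4, hu]
  have hE2 : (Real.exp t)^2 + 1 ≠ 0 := by positivity
  field_simp
  ring

lemma aux_lower (t : ℝ) (ht : 0 ≤ t) :
    t / ((Real.exp t)^2 + 1) ≤ Real.log (1 + (Real.exp t)⁻¹) := by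
  set E := Real.exp t with hE
  have hE1 : 1 ≤ E := by rw [hE]; exact Real.one_le_exp ht
  have hE0 : 0 < E := lt_of_lt_of_le one_pos hE1
  have hEt : t + 1 ≤ E := by rw [hE]; linarith [Real.add_one_le_exp t]
  -- step 1 : 1/(E+1) ≤ log (1 + E⁻¹)
  have s1 : 1 / (E + 1) ≤ Real.log (1 + E⁻¹) := by
    have h := Real.add_one_le_exp (-(1/(E+1)))
    have h2 : E / (E + 1) ≤ Real.exp (-(1/(E+1))) := by
      have : (-(1/(E+1)) + 1) = E / (E+1) := by field_simp; ring
      linarith [this ▸ h]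
    have h3 : Real.log (E / (E+1)) ≤ -(1/(E+1)) := by
      calc Real.log (E / (E+1)) ≤ Real.log (Real.exp (-(1/(E+1)))) :=
            Real.log_le_log (by positivity) h2
        _ = -(1/(E+1)) := Real.log_exp _
    have h4 : Real.log (E / (E+1)) = - Real.log (1 + E⁻¹) := by
      rw [← Real.log_inv]
      congr 1
      field_simp
    linarith [h4 ▸ h3]
  -- step 2 : t/(E^2+1) ≤ 1/(E+1)
  have s2 : t / (E^2 + 1) ≤ 1 / (E + 1) := by
    rw [div_le_div_iff₀ (by positivity) (by positivity)]
    nlinarith [mul_le_mul_of_nonneg_left hEt (le_of_lt hE0)]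
  linarith

lemma aux_upper (t : ℝ) (ht : 0 ≤ t) : Real.log (1 + (Real.exp t)⁻¹) ≤ Real.log 2 := by
  apply Real.log_le_log (by positivity)
  have : (Real.exp t)⁻¹ ≤ 1 := by
    rw [inv_le_one_iff₀]; right; exact Real.one_le_exp ht
  linarith

lemma fSmooth_neg (τ u : ℝ) : fSmooth τ (-u) = fSmooth τ u := by
  unfold fSmooth gSmooth hSmooth
  rw [neg_neg, neg_div, Real.tanh_neg]
  ring

lemma fSmooth_bounds (τ : ℝ) (hτ : 0 < τ) (u : ℝ) :
    |u| ≤ fSmooth τ u ∧ fSmooth τ u ≤ |u| + τ * Real.log 2 := by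
  -- reduce to u ≥ 0
  rcases le_or_gt 0 u with hu | hu
  case _ =>
    rw [abs_of_nonneg hu, fSmooth_identity τ u hτ]
    have ht : 0 ≤ u / τ := div_nonneg hu hτ.le
    have h1 := aux_lower (u/τ) ht
    have h2 := aux_upper (u/τ) ht
    have h3 : 0 ≤ (u/τ) / ((Real.exp (u/τ))^2 + 1) := by positivity
    constructor
    · nlinarith
    · nlinarith
  case _ =>
    rw [← fSmooth_neg, abs_of_neg hu, fSmooth_identity τ (-u) hτ]
    have ht : 0 ≤ (-u) / τ := div_nonneg (by linarith) hτ.le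
    have h1 := aux_lower ((-u)/τ) ht
    have h2 := aux_upper ((-u)/τ) ht
    have h3 : 0 ≤ ((-u)/τ) / ((Real.exp ((-u)/τ))^2 + 1) := by positivity
    constructor
    · nlinarith
    · nlinarith

lemma fSmooth_continuous (τ : ℝ) (hτ : 0 < τ) : Continuous (fun u => fSmooth τ u) := by
  unfold fSmooth gSmooth hSmooth
  have h1 : Continuous fun u : ℝ => Real.log (Real.exp (-u / τ) + 1) := by
    apply Continuous.log (by fun_prop) (fun u => by positivity)
  have h2 : Continuous fun u : ℝ => Real.log (Real.exp (u / τ) + 1) := by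
    apply Continuous.log (by fun_prop) (fun u => by positivity)
  have h3 : Continuous Real.tanh := by
    simp only [funext fun x => Real.tanh_eq_sinh_div_cosh x]
    exact Real.continuous_sinh.div Real.continuous_cosh fun x => (Real.cosh_pos x).ne'
  exact ((continuous_const.mul (h1.add h2)).add
    (continuous_id.mul (h3.comp (continuous_id.div_const τ)))).div_const 2

/-- For an integrable random variable `W`, `f_τ ∘ W` is integrable with
`|E[f_τ(W)] − E[|W|]| ≤ τ·log 2`; in particular `E[f_{τ_n}(W)] → E[|W|]`
whenever `τ_n → 0⁺`. (Uniform convergence of the smoothed population objective,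
from the proof of Theorem 3.4(i).) -/
theorem fSmooth_expectation_approx
    {Ω : Type*} [MeasurableSpace Ω] (P : Measure Ω) [IsProbabilityMeasure P]
    (W : Ω → ℝ) (hW : Integrable W P) :
    (∀ τ : ℝ, 0 < τ →
      Integrable (fun ω => fSmooth τ (W ω)) P ∧
      |(∫ ω, fSmooth τ (W ω) ∂P) - ∫ ω, |W ω| ∂P| ≤ τ * Real.log 2) ∧
    (∀ τ : ℕ → ℝ, (∀ n, 0 < τ n) → Filter.Tendsto τ Filter.atTop (nhds 0) →
      Filter.Tendsto (fun n => ∫ ω, fSmooth (τ n) (W ω) ∂P) Filter.atTop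
        (nhds (∫ ω, |W ω| ∂P))) := by
  have habs : Integrable (fun ω => |W ω|) P := hW.abs
  have key : ∀ τ : ℝ, 0 < τ →
      Integrable (fun ω => fSmooth τ (W ω)) P ∧
      |(∫ ω, fSmooth τ (W ω) ∂P) - ∫ ω, |W ω| ∂P| ≤ τ * Real.log 2 := by
    intro τ hτ
    have hbd := fSmooth_bounds τ hτ
    have hmeas : AEStronglyMeasurable (fun ω => fSmooth τ (W ω)) P :=
      (fSmooth_continuous τ hτ).comp_aestronglyMeasurable hW.aestronglyMeasurable
    have hsum : Integrable (fun ω => |W ω| + τ * Real.log 2) P :=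
      habs.add (integrable_const _)
    have hint : Integrable (fun ω => fSmooth τ (W ω)) P := by
      apply Integrable.mono' hsum hmeas
      filter_upwards with ω
      rw [Real.norm_eq_abs, abs_of_nonneg (le_trans (abs_nonneg _) (hbd (W ω)).1)]
      exact (hbd (W ω)).2
    refine ⟨hint, ?_⟩
    rw [abs_le]
    constructor
    · have h := integral_mono habs hint (fun ω => (hbd (W ω)).1)
      have hlog : 0 ≤ τ * Real.log 2 := by positivity
      linarith
    · have heq : (∫ ω, |W ω| ∂P) + τ * Real.log 2
          = ∫ ω, (|W ω| + τ * Real.log 2) ∂P := by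
        rw [integral_add habs (integrable_const _), integral_const]
        simp
      have h : ∫ ω, fSmooth τ (W ω) ∂P ≤ (∫ ω, |W ω| ∂P) + τ * Real.log 2 := by
        rw [heq]
        exact integral_mono hint hsum (fun ω => (hbd (W ω)).2)
      linarith
  refine ⟨key, ?_⟩
  intro τ hpos hlim
  have hbound : ∀ n, |(∫ ω, fSmooth (τ n) (W ω) ∂P) - ∫ ω, |W ω| ∂P| ≤ τ n * Real.log 2 :=
    fun n => (key (τ n) (hpos n)).2
  have hto0 : Filter.Tendsto (fun n => τ n * Real.log 2) Filter.atTop (nhds 0) := by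
    have := hlim.mul_const (Real.log 2)
    simpa using this
  have : Filter.Tendsto (fun n => (∫ ω, fSmooth (τ n) (W ω) ∂P) - ∫ ω, |W ω| ∂P)
      Filter.atTop (nhds 0) := by
    apply squeeze_zero_norm (fun n => hbound n) hto0
  have h2 := this.add_const (∫ ω, |W ω| ∂P)
  simpa using h2
end

section
/- Let α ∈ ℝ, β > 0, κ > 0. Then the function p ↦ (α + β(log(p/(1−p)) + κp) − (α + βκ/2))² is integrable on (0,1) and ∫₀¹ [α + β(log(p/(1−p)) + κp) − (α + βκ/2)]² dp = β²(κ + κ²/12 + π²/3). -/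
open MeasureTheory Set Real


lemma il_rpow : IntegrableOn (fun x : ℝ => x ^ (-(1/2) : ℝ)) (Set.Ioo 0 1) := by
  have := intervalIntegral.intervalIntegrable_rpow' (a:=0) (b:=1) (r := -(1/2)) (by norm_num)
  rwa [intervalIntegrable_iff_integrableOn_Ioo_of_le zero_le_one] at this

lemma exp_bound {x : ℝ} (hx : x ∈ Set.Ioo (0:ℝ) 1) :
    (Real.log x)^2 ≤ 16 * x ^ (-(1/2) : ℝ) ∧ |Real.log x| ≤ 16 * x ^ (-(1/2) : ℝ) := by
  have hlt : Real.log x < 0 := Real.log_neg hx.1 hx.2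
  set t : ℝ := -Real.log x with ht
  have ht0 : 0 < t := by simp [ht]; linarith
  have hrw : x ^ (-(1/2) : ℝ) = Real.exp (t/2) := by
    rw [Real.rpow_def_of_pos hx.1]; congr 1; simp [ht]; ring
  have h1 : t/4 + 1 ≤ Real.exp (t/4) := Real.add_one_le_exp _
  have h2 : Real.exp (t/4) * Real.exp (t/4) = Real.exp (t/2) := by
    rw [← Real.exp_add]; ring_nf
  have h3 : (Real.log x)^2 = t^2 := by simp [ht]
  have h4 : |Real.log x| = t := by rw [abs_of_neg hlt]
  rw [hrw, h3, h4]
  constructor <;> nlinarith [Real.exp_pos (t/4)]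

lemma int_logsq : IntegrableOn (fun x : ℝ => (Real.log x)^2) (Set.Ioo 0 1) := by
  refine Integrable.mono (il_rpow.const_mul 16) ((Real.measurable_log.pow_const 2).aestronglyMeasurable) ?_
  rw [ae_restrict_iff' measurableSet_Ioo]
  filter_upwards with x hx
  calc ‖(Real.log x)^2‖ = (Real.log x)^2 := by rw [Real.norm_eq_abs, abs_of_nonneg (sq_nonneg _)]
    _ ≤ 16 * x ^ (-(1/2):ℝ) := (exp_bound hx).1
    _ ≤ ‖16 * x ^ (-(1/2):ℝ)‖ := le_abs_self _

lemma int_log : IntegrableOn Real.log (Set.Ioo 0 1) := by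
  refine Integrable.mono (il_rpow.const_mul 16) (Real.measurable_log.aestronglyMeasurable) ?_
  rw [ae_restrict_iff' measurableSet_Ioo]
  filter_upwards with x hx
  calc ‖Real.log x‖ = |Real.log x| := rfl
    _ ≤ 16 * x ^ (-(1/2):ℝ) := (exp_bound hx).2
    _ ≤ ‖16 * x ^ (-(1/2):ℝ)‖ := le_abs_self _

lemma int_pow_log (n : ℕ) : IntegrableOn (fun x : ℝ => x^n * Real.log x) (Set.Ioo 0 1) := by
  refine Integrable.mono int_log ((measurable_id.pow_const n).mul Real.measurable_log).aestronglyMeasurable ?_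
  rw [ae_restrict_iff' measurableSet_Ioo]
  filter_upwards with x hx
  rw [Real.norm_eq_abs, Real.norm_eq_abs, abs_mul]
  have h1 : |x^n| ≤ 1 := by
    rw [abs_pow]
    exact pow_le_one₀ (abs_nonneg x) (by rw [abs_of_pos hx.1]; exact hx.2.le)
  nlinarith [abs_nonneg (Real.log x), abs_nonneg (x^n)]

lemma int_mixed : IntegrableOn (fun x : ℝ => Real.log x * Real.log (1-x)) (Set.Ioo 0 1) := by
  have hrefl : IntegrableOn (fun x : ℝ => (Real.log (1-x))^2) (Set.Ioo 0 1) := by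
    have h := int_logsq
    rw [← intervalIntegrable_iff_integrableOn_Ioo_of_le zero_le_one] at h ⊢
    simpa using (h.comp_sub_left 1).symm
  refine Integrable.mono (int_logsq.add hrefl)
    (Real.measurable_log.mul (Real.measurable_log.comp (measurable_const.sub measurable_id))).aestronglyMeasurable ?_
  rw [ae_restrict_iff' measurableSet_Ioo]
  filter_upwards with x hx
  rw [Real.norm_eq_abs, Real.norm_eq_abs, abs_mul]
  have h1 : |Real.log x| * |Real.log (1-x)| ≤ (Real.log x)^2 + (Real.log (1-x))^2 := by
    nlinarith [sq_abs (Real.log x), sq_abs (Real.log (1-x)), sq_nonneg (|Real.log x| - |Real.log (1-x)|), abs_nonneg (Real.log x), abs_nonneg (Real.log (1-x))]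
  calc |Real.log x| * |Real.log (1-x)| ≤ (Real.log x)^2 + (Real.log (1-x))^2 := h1
    _ ≤ |(Real.log x)^2 + (Real.log (1-x))^2| := le_abs_self _

lemma integral_pow_mul_log (n : ℕ) :
    ∫ x in (0:ℝ)..1, x^n * Real.log x = -(1/((n:ℝ)+1)^2) := by
  have hne : ((n:ℝ)+1) ≠ 0 := by positivity
  set F : ℝ → ℝ := fun x => x^(n+1) * Real.log x/((n:ℝ)+1) - x^(n+1)/((n:ℝ)+1)^2 with hF
  have hFeq : F = fun x => (x^n * (x * Real.log x))/((n:ℝ)+1) - x^(n+1)/((n:ℝ)+1)^2 := by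
    funext x; simp only [hF]; ring
  have hcont : ContinuousOn F (Set.Icc 0 1) := by
    rw [hFeq]
    exact (((continuous_pow n).mul Real.continuous_mul_log).div_const _).sub
      ((continuous_pow (n+1)).div_const _) |>.continuousOn
  have hderiv : ∀ x ∈ Set.Ioo (0:ℝ) 1, HasDerivWithinAt F (x^n * Real.log x) (Set.Ioi x) x := by
    intro x hx
    have hx0 : x ≠ 0 := ne_of_gt hx.1
    have h2 : HasDerivAt (fun y : ℝ => y^(n+1)) (((n:ℝ)+1)*x^n) x := by
      simpa using hasDerivAt_pow (n+1) x
    have h3 : HasDerivAt (fun y => y^(n+1) * Real.log y)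
        (((n:ℝ)+1)*x^n * Real.log x + x^(n+1) * x⁻¹) x :=
      h2.mul (Real.hasDerivAt_log hx0)
    have h4 : HasDerivAt F
        ((((n:ℝ)+1)*x^n * Real.log x + x^(n+1) * x⁻¹)/((n:ℝ)+1) - (((n:ℝ)+1)*x^n)/((n:ℝ)+1)^2) x :=
      (h3.div_const _).sub (h2.div_const _)
    have : (((n:ℝ)+1)*x^n * Real.log x + x^(n+1) * x⁻¹)/((n:ℝ)+1) - (((n:ℝ)+1)*x^n)/((n:ℝ)+1)^2
        = x^n * Real.log x := by field_simp; ring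
    rw [this] at h4
    exact h4.hasDerivWithinAt
  have hint : IntervalIntegrable (fun x : ℝ => x^n * Real.log x) volume 0 1 := by
    rw [intervalIntegrable_iff_integrableOn_Ioo_of_le zero_le_one]; exact int_pow_log n
  rw [intervalIntegral.integral_eq_sub_of_hasDeriv_right_of_le zero_le_one hcont hderiv hint]
  simp [hF]

lemma intervalIntegral_logsq : ∫ x in (0:ℝ)..1, (Real.log x)^2 = 2 := by
  set F : ℝ → ℝ := fun x => x * (Real.log x)^2 - 2*(x*Real.log x) + 2*x with hF
  have hcont : ContinuousOn F (Set.Icc 0 1) := by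
    have hG : Continuous fun x : ℝ => (2 * (Real.sqrt x * Real.log (Real.sqrt x)))^2 :=
      ((continuous_const.mul (Real.continuous_mul_log.comp Real.continuous_sqrt)).pow 2)
    have h1 : ContinuousOn (fun x : ℝ => x * (Real.log x)^2) (Set.Icc 0 1) := by
      refine ContinuousOn.congr hG.continuousOn ?_
      intro x hx
      show x * (Real.log x)^2 = (2 * (Real.sqrt x * Real.log (Real.sqrt x)))^2
      rw [Real.log_sqrt hx.1, mul_pow, mul_pow, Real.sq_sqrt hx.1]
      ring
    exact (h1.sub ((continuous_const.mul Real.continuous_mul_log).continuousOn)).add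
      (continuous_const.mul continuous_id).continuousOn
  have hderiv : ∀ x ∈ Set.Ioo (0:ℝ) 1, HasDerivWithinAt F ((Real.log x)^2) (Set.Ioi x) x := by
    intro x hx
    have hx0 : x ≠ 0 := ne_of_gt hx.1
    have hlog := Real.hasDerivAt_log hx0
    have h1 : HasDerivAt (fun y : ℝ => (Real.log y)^2) (2 * Real.log x ^ 1 * x⁻¹) x := by
      simpa using hlog.fun_pow 2
    have h2 : HasDerivAt (fun y : ℝ => y * (Real.log y)^2)
        (1 * (Real.log x)^2 + x * (2 * Real.log x ^ 1 * x⁻¹)) x := (hasDerivAt_id x).mul h1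
    have h3 : HasDerivAt (fun y : ℝ => y * Real.log y) (1 * Real.log x + x * x⁻¹) x :=
      (hasDerivAt_id x).mul hlog
    have h4 : HasDerivAt F
        ((1 * (Real.log x)^2 + x * (2 * Real.log x ^ 1 * x⁻¹)) - 2*(1 * Real.log x + x * x⁻¹) + 2*1) x := by
      exact ((h2.sub (h3.const_mul 2)).add ((hasDerivAt_id x).const_mul 2))
    have : (1 * (Real.log x)^2 + x * (2 * Real.log x ^ 1 * x⁻¹)) - 2*(1 * Real.log x + x * x⁻¹) + 2*1
        = (Real.log x)^2 := by field_simp; ring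
    rw [this] at h4
    exact h4.hasDerivWithinAt
  have hint : IntervalIntegrable (fun x : ℝ => (Real.log x)^2) volume 0 1 := by
    rw [intervalIntegrable_iff_integrableOn_Ioo_of_le zero_le_one]; exact int_logsq
  rw [intervalIntegral.integral_eq_sub_of_hasDeriv_right_of_le zero_le_one hcont hderiv hint]
  simp [hF]

lemma hasSum_aux : HasSum (fun n : ℕ => 1/(((n:ℝ)+1)*((n:ℝ)+2)^2)) (2 - Real.pi^2/6) := by
  have hz : HasSum (fun n : ℕ => (1:ℝ)/((n:ℝ)+2)^2) (Real.pi^2/6 - 1) := by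
    have h := (hasSum_nat_add_iff' (f := fun n : ℕ => (1:ℝ)/(n:ℝ)^2) 2).mpr hasSum_zeta_two
    have e1 : (fun n : ℕ => (1:ℝ)/((n+2:ℕ):ℝ)^2) = fun n : ℕ => (1:ℝ)/((n:ℝ)+2)^2 := by
      funext n; push_cast; ring_nf
    have e2 : Real.pi^2/6 - ∑ i ∈ Finset.range 2, (1:ℝ)/(i:ℝ)^2 = Real.pi^2/6 - 1 := by
      norm_num [Finset.sum_range_succ]
    rwa [e1, e2] at h
  have ht : HasSum (fun n : ℕ => 1/((n:ℝ)+1) - 1/((n:ℝ)+2)) 1 := by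
    rw [hasSum_iff_tendsto_nat_of_nonneg]
    · have hsum : ∀ N : ℕ, ∑ n ∈ Finset.range N, (1/((n:ℝ)+1) - 1/((n:ℝ)+2)) = 1 - 1/((N:ℝ)+1) := by
        intro N
        induction N with
        | zero => simp
        | succ k ih =>
          rw [Finset.sum_range_succ, ih]
          push_cast
          have h1 : ((k:ℝ)+1) ≠ 0 := by positivity
          have h2 : ((k:ℝ)+2) ≠ 0 := by positivity
          field_simp
          ring
      simp_rw [hsum]
      have := tendsto_one_div_add_atTop_nhds_zero_nat (𝕜 := ℝ)
      simpa using Filter.Tendsto.const_sub 1 this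
    · intro n
      have h1 : (0:ℝ) < (n:ℝ)+1 := by positivity
      have h2 : (0:ℝ) < (n:ℝ)+2 := by positivity
      rw [sub_nonneg]
      gcongr
      linarith
  have hts := ht.sub hz
  have e3 : (fun n : ℕ => (1/((n:ℝ)+1) - 1/((n:ℝ)+2)) - 1/((n:ℝ)+2)^2)
      = fun n : ℕ => 1/(((n:ℝ)+1)*((n:ℝ)+2)^2) := by
    funext n
    have h1 : ((n:ℝ)+1) ≠ 0 := by positivity
    have h2 : ((n:ℝ)+2) ≠ 0 := by positivity
    field_simp
    ring
  have e4 : (1:ℝ) - (Real.pi^2/6 - 1) = 2 - Real.pi^2/6 := by ring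
  rwa [e3, e4] at hts

lemma ioo_pow_mul_log (n : ℕ) :
    ∫ x in Set.Ioo (0:ℝ) 1, x^n * Real.log x = -(1/((n:ℝ)+1)^2) := by
  rw [← MeasureTheory.integral_Ioc_eq_integral_Ioo, ← intervalIntegral.integral_of_le zero_le_one,
    integral_pow_mul_log n]

lemma integral_log_mul_log :
    ∫ x in Set.Ioo (0:ℝ) 1, Real.log x * Real.log (1-x) = 2 - Real.pi^2/6 := by
  set μ := volume.restrict (Set.Ioo (0:ℝ) 1) with hμ
  set F : ℕ → ℝ → ℝ := fun n x => x^(n+1)/((n:ℝ)+1) * (-Real.log x) with hFdef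
  have hFrw : ∀ n : ℕ, F n = fun x => (-(((n:ℝ)+1)⁻¹)) * (x^(n+1) * Real.log x) := by
    intro n; funext x; simp only [hFdef]; ring
  have hval : ∀ n : ℕ, ∫ x, x^(n+1) * Real.log x ∂μ = -(1/((n:ℝ)+2)^2) := by
    intro n
    rw [hμ]
    have := ioo_pow_mul_log (n+1)
    rw [this]; push_cast; ring_nf
  have hFint : ∀ n : ℕ, Integrable (F n) μ := by
    intro n
    rw [hFrw n]
    exact (int_pow_log (n+1)).const_mul _
  have hFnorm : ∀ n : ℕ, ∫ x, ‖F n x‖ ∂μ = 1/(((n:ℝ)+1)*((n:ℝ)+2)^2) := by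
    intro n
    have h1 : ∀ x ∈ Set.Ioo (0:ℝ) 1, ‖F n x‖ = (-(((n:ℝ)+1)⁻¹)) * (x^(n+1) * Real.log x) := by
      intro x hx
      rw [Real.norm_eq_abs, abs_of_nonneg]
      · rw [hFrw n]
      · simp only [hFdef]
        apply mul_nonneg (div_nonneg (pow_nonneg hx.1.le _) (by positivity))
        rw [neg_nonneg]
        exact Real.log_nonpos hx.1.le hx.2.le
    rw [hμ, setIntegral_congr_fun measurableSet_Ioo h1, MeasureTheory.integral_const_mul]
    rw [← hμ, hval n]
    have h2 : ((n:ℝ)+1) ≠ 0 := by positivity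
    have h3 : ((n:ℝ)+2) ≠ 0 := by positivity
    field_simp
  have hFsum : Summable (fun n : ℕ => ∫ x, ‖F n x‖ ∂μ) := by
    rw [funext hFnorm]
    exact hasSum_aux.summable
  have key := MeasureTheory.integral_tsum_of_summable_integral_norm hFint hFsum
  have hL : (∑' n : ℕ, ∫ x, F n x ∂μ) = 2 - Real.pi^2/6 := by
    have : ∀ n : ℕ, ∫ x, F n x ∂μ = 1/(((n:ℝ)+1)*((n:ℝ)+2)^2) := by
      intro n
      rw [hFrw n, MeasureTheory.integral_const_mul, hval n]
      have h2 : ((n:ℝ)+1) ≠ 0 := by positivity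
      have h3 : ((n:ℝ)+2) ≠ 0 := by positivity
      field_simp
    rw [funext this]
    exact hasSum_aux.tsum_eq
  have hR : (∫ x, (∑' n : ℕ, F n x) ∂μ) = ∫ x in Set.Ioo (0:ℝ) 1, Real.log x * Real.log (1-x) := by
    rw [hμ]
    apply setIntegral_congr_fun measurableSet_Ioo
    intro x hx
    have habs : |x| < 1 := by rw [abs_of_pos hx.1]; exact hx.2
    have h := (hasSum_pow_div_log_of_abs_lt_one habs).mul_right (-Real.log x)
    have e : (∑' n : ℕ, F n x) = -Real.log (1-x) * (-Real.log x) := by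
      refine HasSum.tsum_eq ?_
      exact h
    show (∑' n : ℕ, F n x) = Real.log x * Real.log (1-x)
    rw [e]
    ring
  rw [← hR, ← key, hL]

lemma II_logsq : IntervalIntegrable (fun x : ℝ => (Real.log x)^2) volume 0 1 := by
  rw [intervalIntegrable_iff_integrableOn_Ioo_of_le zero_le_one]; exact int_logsq

lemma II_logsq' : IntervalIntegrable (fun x : ℝ => (Real.log (1-x))^2) volume 0 1 := by
  simpa using (II_logsq.comp_sub_left 1).symm

lemma II_mixed : IntervalIntegrable (fun x : ℝ => Real.log x * Real.log (1-x)) volume 0 1 := by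
  rw [intervalIntegrable_iff_integrableOn_Ioo_of_le zero_le_one]; exact int_mixed

lemma II_log : IntervalIntegrable Real.log volume 0 1 := by
  rw [intervalIntegrable_iff_integrableOn_Ioo_of_le zero_le_one]; exact int_log

lemma II_xlog : IntervalIntegrable (fun x : ℝ => x * Real.log x) volume 0 1 := by
  have h : IntervalIntegrable (fun x : ℝ => x^1 * Real.log x) volume 0 1 := by
    rw [intervalIntegrable_iff_integrableOn_Ioo_of_le zero_le_one]; exact int_pow_log 1
  simpa using h

lemma II_log' : IntervalIntegrable (fun x : ℝ => Real.log (1-x)) volume 0 1 := by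
  simpa using (II_log.comp_sub_left 1).symm

lemma II_xlog' : IntervalIntegrable (fun x : ℝ => x * Real.log (1-x)) volume 0 1 := by
  have h : IntervalIntegrable (fun x : ℝ => (1 - x) * Real.log x) volume 0 1 :=
    (II_log.sub II_xlog).congr ?_
  · have h2 := h.comp_sub_left 1
    simp only [sub_sub_cancel, sub_self, sub_zero] at h2
    exact h2.symm
  · intro x _
    show Real.log x - x * Real.log x = (1 - x) * Real.log x
    ring

lemma V_log : ∫ x in (0:ℝ)..1, Real.log x = -1 := by
  have h := integral_pow_mul_log 0
  simpa using h

lemma V_xlog : ∫ x in (0:ℝ)..1, x * Real.log x = -(1/4) := by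
  have h := integral_pow_mul_log 1
  simp only [pow_one] at h
  rw [h]; norm_num

lemma V_logsq' : ∫ x in (0:ℝ)..1, (Real.log (1-x))^2 = 2 := by
  have h := intervalIntegral.integral_comp_sub_left (a := 0) (b := 1) (fun x : ℝ => (Real.log x)^2) 1
  simp only [sub_self, sub_zero] at h
  rw [h, intervalIntegral_logsq]

lemma V_log' : ∫ x in (0:ℝ)..1, Real.log (1-x) = -1 := by
  have h := intervalIntegral.integral_comp_sub_left (a := 0) (b := 1) Real.log 1
  simp only [sub_self, sub_zero] at h
  rw [h, V_log]

lemma V_xlog' : ∫ x in (0:ℝ)..1, x * Real.log (1-x) = -(3/4) := by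
  have h := intervalIntegral.integral_comp_sub_left (a := 0) (b := 1) (fun y : ℝ => (1-y) * Real.log y) 1
  simp only [sub_self, sub_zero, sub_sub_cancel] at h
  rw [h]
  have e : (fun y : ℝ => (1-y) * Real.log y) = fun y : ℝ => Real.log y - y * Real.log y := by
    funext y; ring
  rw [e, intervalIntegral.integral_sub II_log II_xlog, V_log, V_xlog]
  norm_num

lemma V_mixed : ∫ x in (0:ℝ)..1, Real.log x * Real.log (1-x) = 2 - Real.pi^2/6 := by
  rw [intervalIntegral.integral_of_le zero_le_one, MeasureTheory.integral_Ioc_eq_integral_Ioo,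
    integral_log_mul_log]

lemma V_poly : ∫ x in (0:ℝ)..1, (x - 1/2)^2 = 1/12 := by
  rw [intervalIntegral.integral_comp_sub_right (fun u : ℝ => u^2) (1/2)]
  rw [integral_pow]
  norm_num

/-- The variance of the flattened logistic distribution `FLD(α,β,κ)`: the squared
deviation of the quantile function from the mean `α + βκ/2` is integrable on `(0,1)` with
integral `β²(κ + κ²/12 + π²/3)` (Section 4.1 of the paper). -/
theorem fld_variance
    (α β κ : ℝ) (hβ : 0 < β) (hκ : 0 < κ) :
    IntegrableOn
      (fun p : ℝ => (α + β * (Real.log (p / (1 - p)) + κ * p) - (α + β * κ / 2)) ^ 2)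
      (Set.Ioo 0 1) ∧
    ∫ p in Set.Ioo (0 : ℝ) 1,
        (α + β * (Real.log (p / (1 - p)) + κ * p) - (α + β * κ / 2)) ^ 2 =
      β ^ 2 * (κ + κ ^ 2 / 12 + Real.pi ^ 2 / 3) := by
  set inner : ℝ → ℝ := fun x =>
    (Real.log x)^2 + (Real.log (1-x))^2 - 2*(Real.log x * Real.log (1-x))
      + 2*κ*(x*Real.log x) - κ*Real.log x - 2*κ*(x*Real.log (1-x)) + κ*Real.log (1-x)
      + κ^2*(x-1/2)^2 with hinner
  have hEq : Set.EqOn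
      (fun p : ℝ => (α + β * (Real.log (p / (1 - p)) + κ * p) - (α + β * κ / 2)) ^ 2)
      (fun p : ℝ => β^2 * inner p) (Set.Ioo 0 1) := by
    intro p hp
    have h1 : p ≠ 0 := ne_of_gt hp.1
    have h2 : (1:ℝ) - p ≠ 0 := sub_ne_zero_of_ne hp.2.ne'
    simp only [hinner]
    rw [Real.log_div h1 h2]
    ring
  have IIpoly : IntervalIntegrable (fun x : ℝ => (x-1/2)^2) volume 0 1 := by
    apply Continuous.intervalIntegrable; fun_prop
  have hA := II_logsq
  have hB := II_logsq'
  have hC := II_mixed.const_mul 2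
  have hD := II_xlog.const_mul (2*κ)
  have hE := II_log.const_mul κ
  have hF := II_xlog'.const_mul (2*κ)
  have hG := II_log'.const_mul κ
  have hH := IIpoly.const_mul (κ^2)
  have s1 := hA.add hB
  have s2 := s1.sub hC
  have s3 := s2.add hD
  have s4 := s3.sub hE
  have s5 := s4.sub hF
  have s6 := s5.add hG
  have s7 : IntervalIntegrable inner volume 0 1 := s6.add hH
  have hIntE : IntegrableOn (fun p : ℝ => β^2 * inner p) (Set.Ioo 0 1) := by
    rw [← intervalIntegrable_iff_integrableOn_Ioo_of_le zero_le_one]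
    exact s7.const_mul (β^2)
  constructor
  · exact hIntE.congr_fun (fun p hp => (hEq hp).symm) measurableSet_Ioo
  · rw [setIntegral_congr_fun measurableSet_Ioo hEq]
    rw [← MeasureTheory.integral_Ioc_eq_integral_Ioo, ← intervalIntegral.integral_of_le zero_le_one]
    rw [intervalIntegral.integral_const_mul]
    simp only [hinner]
    rw [intervalIntegral.integral_add s6 hH, intervalIntegral.integral_add s5 hG,
      intervalIntegral.integral_sub s4 hF, intervalIntegral.integral_sub s3 hE,
      intervalIntegral.integral_add s2 hD, intervalIntegral.integral_sub s1 hC,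
      intervalIntegral.integral_add hA hB]
    rw [intervalIntegral.integral_const_mul, intervalIntegral.integral_const_mul,
      intervalIntegral.integral_const_mul, intervalIntegral.integral_const_mul,
      intervalIntegral.integral_const_mul, intervalIntegral.integral_const_mul]
    rw [intervalIntegral_logsq, V_logsq', V_mixed, V_xlog, V_log, V_xlog', V_log', V_poly]
    ring
end
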